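/- arXiv:2503.01316 — 4 statements merged into one kernel-verified Lean document; each statement's English description precedes it below -/
import Mathlib

section
/- Let A be a unital associative algebra over a field k, and let r = Σ r⁽¹⁾ ⊗ r⁽²⁾ and s = Σ s⁽¹⁾ ⊗ s⁽²⁾ be elements of A ⊗ A forming an associative Yang-Baxter pair, i.e. r¹³r¹² − r¹²r²³ + s²³r¹³ = 0 and s¹³r¹² − s¹²s²³ + s²³s¹³ = 0 in A ⊗ A ⊗ A. Define R(a) = Σ r⁽¹⁾ a r⁽²⁾ and S(a) = Σ s⁽¹⁾ a s⁽²⁾. Then (A, R, S) is a Rota-Baxter system: for all a, b ∈ A one has R(a)R(b) = R(R(a)b + aS(b)) and S(a)S(b) = S(R(a)b + aS(b)). -/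
open scoped TensorProduct

/-- `Fbil x y` is the operator `a ↦ x * a * y`. -/
noncomputable def Fbil (k A : Type*) [CommSemiring k] [Ring A] [Algebra k A] :
    A →ₗ[k] A →ₗ[k] (A →ₗ[k] A) :=
  LinearMap.mk₂ k (fun x y => (LinearMap.mulLeft k x).comp (LinearMap.mulRight k y))
    (fun x x' y => by ext a; simp [add_mul])
    (fun c x y => by ext a; simp [smul_mul_assoc])
    (fun x y y' => by ext a; simp [mul_add])
    (fun c x y => by ext a; simp [mul_smul_comm])

/-- `F2 (Σ x ⊗ y)` is the operator `a ↦ Σ x * a * y`. -/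
noncomputable def F2 (k A : Type*) [CommSemiring k] [Ring A] [Algebra k A] :
    A ⊗[k] A →ₗ[k] (A →ₗ[k] A) :=
  TensorProduct.lift (Fbil k A)

/-- `r ↦ r¹² = r ⊗ 1`. -/
noncomputable def e12 (k A : Type*) [CommSemiring k] [Ring A] [Algebra k A] :
    A ⊗[k] A →ₐ[k] (A ⊗[k] A) ⊗[k] A :=
  Algebra.TensorProduct.includeLeft

/-- `a ⊗ b ↦ (a ⊗ b)¹³ = a ⊗ 1 ⊗ b`. -/
noncomputable def e13 (k A : Type*) [CommSemiring k] [Ring A] [Algebra k A] :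
    A ⊗[k] A →ₐ[k] (A ⊗[k] A) ⊗[k] A :=
  Algebra.TensorProduct.map Algebra.TensorProduct.includeLeft (AlgHom.id k A)

/-- `r ↦ r²³ = 1 ⊗ r`. -/
noncomputable def e23 (k A : Type*) [CommSemiring k] [Ring A] [Algebra k A] :
    A ⊗[k] A →ₐ[k] (A ⊗[k] A) ⊗[k] A :=
  Algebra.TensorProduct.map Algebra.TensorProduct.includeRight (AlgHom.id k A)

section Aux

variable (k A : Type*) [CommSemiring k] [Ring A] [Algebra k A]

/-- `Phi ((x ⊗ y) ⊗ z)` is the operator `(a, b) ↦ x * a * y * b * z`. -/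
noncomputable def Phi : (A ⊗[k] A) ⊗[k] A →ₗ[k] (A →ₗ[k] A →ₗ[k] A) :=
  TensorProduct.lift <| LinearMap.mk₂ k
    (fun u z => ((Fbil k A).flip z).comp (F2 k A u))
    (fun u u' z => by ext a b; simp [Fbil, F2])
    (fun c u z => by ext a b; simp [Fbil, F2])
    (fun u z z' => by ext a b; simp [Fbil, F2, mul_add])
    (fun c u z => by ext a b; simp [Fbil, F2, mul_smul_comm])

variable {k A}

lemma Phi_tmul (x y z a b : A) :
    Phi k A ((x ⊗ₜ[k] y) ⊗ₜ[k] z) a b = x * a * y * b * z := by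
  simp [Phi, F2, Fbil, mul_assoc]

lemma F2_tmul (x y a : A) : F2 k A (x ⊗ₜ[k] y) a = x * a * y := by
  simp [F2, Fbil, mul_assoc]

lemma key1 (u v : A ⊗[k] A) (a b : A) :
    Phi k A (e13 k A u * e12 k A v) a b = F2 k A u (F2 k A v a * b) := by
  induction u using TensorProduct.induction_on with
  | zero => simp
  | tmul x y =>
    induction v using TensorProduct.induction_on with
    | zero => simp
    | tmul p q =>
      simp only [e13, e12, Algebra.TensorProduct.map_tmul,
        Algebra.TensorProduct.includeLeft_apply, AlgHom.coe_id, id_eq,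
        Algebra.TensorProduct.tmul_mul_tmul, mul_one, one_mul,
        Phi_tmul, F2_tmul]
      simp [mul_assoc]
    | add v₁ v₂ h₁ h₂ => simp [mul_add, add_mul, h₁, h₂]
  | add u₁ u₂ h₁ h₂ => simp [mul_add, add_mul, h₁, h₂]

lemma key2 (u v : A ⊗[k] A) (a b : A) :
    Phi k A (e12 k A u * e23 k A v) a b = F2 k A u a * F2 k A v b := by
  induction u using TensorProduct.induction_on with
  | zero => simp
  | tmul x y =>
    induction v using TensorProduct.induction_on with
    | zero => simp
    | tmul p q =>
      simp only [e13, e12, e23, Algebra.TensorProduct.map_tmul,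
        Algebra.TensorProduct.includeLeft_apply,
        Algebra.TensorProduct.includeRight_apply, AlgHom.coe_id, id_eq,
        Algebra.TensorProduct.tmul_mul_tmul, mul_one, one_mul,
        Phi_tmul, F2_tmul]
      simp [mul_assoc]
    | add v₁ v₂ h₁ h₂ => simp [mul_add, add_mul, h₁, h₂]
  | add u₁ u₂ h₁ h₂ => simp [mul_add, add_mul, h₁, h₂]

lemma key3 (u v : A ⊗[k] A) (a b : A) :
    Phi k A (e23 k A u * e13 k A v) a b = F2 k A v (a * F2 k A u b) := by
  induction u using TensorProduct.induction_on with
  | zero => simp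
  | tmul x y =>
    induction v using TensorProduct.induction_on with
    | zero => simp
    | tmul p q =>
      simp only [e13, e23, Algebra.TensorProduct.map_tmul,
        Algebra.TensorProduct.includeLeft_apply,
        Algebra.TensorProduct.includeRight_apply, AlgHom.coe_id, id_eq,
        Algebra.TensorProduct.tmul_mul_tmul, mul_one, one_mul,
        Phi_tmul, F2_tmul]
      simp [mul_assoc]
    | add v₁ v₂ h₁ h₂ => simp [mul_add, add_mul, h₁, h₂]
  | add u₁ u₂ h₁ h₂ => simp [mul_add, add_mul, h₁, h₂]

end Aux

/-- An associative Yang–Baxter pair `(r, s)` on a unital algebra `A` gives a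
Rota–Baxter system `(A, F2 r, F2 s)`. -/
theorem stmt0 (k A : Type*) [Field k] [Ring A] [Algebra k A] (r s : A ⊗[k] A)
    (h1 : e13 k A r * e12 k A r - e12 k A r * e23 k A r + e23 k A s * e13 k A r = 0)
    (h2 : e13 k A s * e12 k A r - e12 k A s * e23 k A s + e23 k A s * e13 k A s = 0) :
    ∀ a b : A,
      F2 k A r a * F2 k A r b = F2 k A r (F2 k A r a * b + a * F2 k A s b) ∧
      F2 k A s a * F2 k A s b = F2 k A s (F2 k A r a * b + a * F2 k A s b) := by
  intro a b
  have H1 := congrFun (congrArg (fun t => ⇑(Phi k A t a)) h1) b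
  have H2 := congrFun (congrArg (fun t => ⇑(Phi k A t a)) h2) b
  simp only [map_sub, map_add, map_zero, LinearMap.sub_apply, LinearMap.add_apply,
    LinearMap.zero_apply, key1, key2, key3] at H1 H2
  rw [sub_add_eq_add_sub, sub_eq_zero] at H1 H2
  constructor
  · rw [map_add]; exact H1.symm
  · rw [map_add]; exact H2.symm
end

section
/- Let A be a unital associative k-algebra and let r, s ∈ A ⊗ A satisfy the associative Yang-Baxter pair equation r¹³r¹² − r¹²r²³ + s²³r¹³ = 0. Then the linear operators R(a) = Σ r⁽¹⁾ a r⁽²⁾ and S(a) = Σ s⁽¹⁾ a s⁽²⁾ satisfy, for all a, b ∈ A: R(a)R(b) − R(R(a)b) − R(aS(b)) equals the image of r¹³r¹² − r¹²r²³ + s²³r¹³ under the map sending x₁ ⊗ x₂ ⊗ x₃ to x₁ a x₂ b x₃; in particular this expression vanishes. -/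
open scoped TensorProduct

/-- `psi a b` sends `Σ x ⊗ y ⊗ z ∈ A⊗A⊗A` to `Σ x * a * y * b * z`. -/
noncomputable def psi (k A : Type*) [CommSemiring k] [Ring A] [Algebra k A] (a b : A) :
    (A ⊗[k] A) ⊗[k] A →ₗ[k] A :=
  TensorProduct.lift
    ((LinearMap.mul k A).comp ((LinearMap.mulRight k b).comp ((F2 k A).flip a)))


section Aux
variable {k A : Type*} [CommSemiring k] [Ring A] [Algebra k A]

lemma psi_e12_mul_e23 (a b : A) (r r' : A ⊗[k] A) :
    psi k A a b (e12 k A r * e23 k A r') = F2 k A r a * F2 k A r' b := by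
  induction r using TensorProduct.induction_on with
  | zero => simp
  | tmul x y =>
    induction r' using TensorProduct.induction_on with
    | zero => simp
    | tmul u v =>
      simp [psi, F2, Fbil, e12, e23, Algebra.TensorProduct.tmul_mul_tmul, mul_assoc]
    | add p q hp hq => simp [mul_add, hp, hq]
  | add p q hp hq => simp [add_mul, hp, hq]

lemma psi_e13_mul_e12 (a b : A) (r r' : A ⊗[k] A) :
    psi k A a b (e13 k A r' * e12 k A r) = F2 k A r' (F2 k A r a * b) := by
  induction r using TensorProduct.induction_on with
  | zero => simp
  | tmul x y =>
    induction r' using TensorProduct.induction_on with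
    | zero => simp
    | tmul u v =>
      simp [psi, F2, Fbil, e12, e13, Algebra.TensorProduct.tmul_mul_tmul, mul_assoc]
    | add p q hp hq => simp [add_mul, hp, hq, map_add]
  | add p q hp hq => simp [mul_add, add_mul, map_add, hp, hq]

lemma psi_e23_mul_e13 (a b : A) (r s : A ⊗[k] A) :
    psi k A a b (e23 k A s * e13 k A r) = F2 k A r (a * F2 k A s b) := by
  induction r using TensorProduct.induction_on with
  | zero => simp
  | tmul x y =>
    induction s using TensorProduct.induction_on with
    | zero => simp
    | tmul u v =>
      simp [psi, F2, Fbil, e13, e23, Algebra.TensorProduct.tmul_mul_tmul, mul_assoc]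
    | add p q hp hq => simp [add_mul, hp, hq, mul_add, map_add]
  | add p q hp hq => simp [mul_add, hp, hq]

end Aux

/-- For `R = F2 r`, `S = F2 s`, the defect `R(a)R(b) − R(R(a)b) − R(aS(b))` is the image of
`r¹³r¹² − r¹²r²³ + s²³r¹³` under `x₁⊗x₂⊗x₃ ↦ x₁ a x₂ b x₃`; in particular, if
`r¹³r¹² − r¹²r²³ + s²³r¹³ = 0` then it vanishes. -/
theorem stmt1 (k A : Type*) [Field k] [Ring A] [Algebra k A] (r s : A ⊗[k] A)
    (h1 : e13 k A r * e12 k A r - e12 k A r * e23 k A r + e23 k A s * e13 k A r = 0) :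
    ∀ a b : A,
      F2 k A r a * F2 k A r b - F2 k A r (F2 k A r a * b) - F2 k A r (a * F2 k A s b)
        = psi k A a b
            (e13 k A r * e12 k A r - e12 k A r * e23 k A r + e23 k A s * e13 k A r) ∧
      F2 k A r a * F2 k A r b - F2 k A r (F2 k A r a * b) - F2 k A r (a * F2 k A s b) = 0 := by
  intro a b
  have hpsi : psi k A a b
      (e13 k A r * e12 k A r - e12 k A r * e23 k A r + e23 k A s * e13 k A r) = 0 := by
    rw [h1, map_zero]
  have hL : F2 k A r a * F2 k A r b - F2 k A r (F2 k A r a * b) - F2 k A r (a * F2 k A s b)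
      = - psi k A a b
          (e13 k A r * e12 k A r - e12 k A r * e23 k A r + e23 k A s * e13 k A r) := by
    rw [map_add, map_sub, psi_e12_mul_e23, psi_e13_mul_e12, psi_e23_mul_e13]
    abel
  rw [hL, hpsi, neg_zero]
  exact ⟨rfl, rfl⟩
end

section
/- Let (V, {m_n}, {R_n}, {S_n}) be a homotopy Rota-Baxter system. Then the homology H(V, m₁), equipped with the multiplication induced by m₂ and the operators induced by R₁ and S₁, is a Rota-Baxter system in the classical sense. -/
/-- Let `(V, {m_n}, {R_n}, {S_n})` be a homotopy Rota-Baxter system (here presented by its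
structure maps in arities `≤ 3`, with Koszul signs on homogeneous elements of the grading `𝒢`).
Then the homology `H(V, m₁)`, with product induced by `m₂` and operators induced by `R₁, S₁`,
is a classical Rota-Baxter system: the product is associative up to boundary and the two
Rota-Baxter system identities hold up to boundary on cycles. -/
theorem stmt11 (k V : Type*) [Field k] [AddCommGroup V] [Module k V]
    (𝒢 : ℤ → Submodule k V)
    (m₁ : V →ₗ[k] V) (m₂ : V →ₗ[k] V →ₗ[k] V) (m₃ : V →ₗ[k] V →ₗ[k] V →ₗ[k] V)
    (R₁ S₁ : V →ₗ[k] V) (R₂ S₂ : V →ₗ[k] V →ₗ[k] V)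
    (st1 : ∀ x : V, m₁ (m₁ x) = 0)
    (st2 : ∀ p : ℤ, ∀ x ∈ 𝒢 p, ∀ y : V,
      m₁ (m₂ x y) = m₂ (m₁ x) y + (((-1 : ℤˣ) ^ p : ℤˣ) : ℤ) • m₂ x (m₁ y))
    (st3 : ∀ p q : ℤ, ∀ x ∈ 𝒢 p, ∀ y ∈ 𝒢 q, ∀ z : V,
      m₁ (m₃ x y z) + m₃ (m₁ x) y z
        + (((-1 : ℤˣ) ^ p : ℤˣ) : ℤ) • m₃ x (m₁ y) z
        + (((-1 : ℤˣ) ^ (p + q) : ℤˣ) : ℤ) • m₃ x y (m₁ z)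
        + m₂ (m₂ x y) z - m₂ x (m₂ y z) = 0)
    (hR1 : ∀ x : V, m₁ (R₁ x) = R₁ (m₁ x))
    (hS1 : ∀ x : V, m₁ (S₁ x) = S₁ (m₁ x))
    (hR2 : ∀ p : ℤ, ∀ a ∈ 𝒢 p, ∀ b : V,
      m₂ (R₁ a) (R₁ b) - R₁ (m₂ a (S₁ b)) - R₁ (m₂ (R₁ a) b)
        = -(m₁ (R₂ a b) + (((-1 : ℤˣ) ^ p : ℤˣ) : ℤ) • R₂ a (m₁ b) + R₂ (m₁ a) b))
    (hS2 : ∀ p : ℤ, ∀ a ∈ 𝒢 p, ∀ b : V,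
      m₂ (S₁ a) (S₁ b) - S₁ (m₂ a (S₁ b)) - S₁ (m₂ (R₁ a) b)
        = -(m₁ (S₂ a b) + (((-1 : ℤˣ) ^ p : ℤˣ) : ℤ) • S₂ a (m₁ b) + S₂ (m₁ a) b)) :
    (∀ p q : ℤ, ∀ x ∈ 𝒢 p, ∀ y ∈ 𝒢 q, ∀ z : V, m₁ x = 0 → m₁ y = 0 → m₁ z = 0 →
      ∃ w : V, m₂ (m₂ x y) z - m₂ x (m₂ y z) = m₁ w) ∧
    (∀ p : ℤ, ∀ a ∈ 𝒢 p, ∀ b : V, m₁ a = 0 → m₁ b = 0 →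
      ∃ w : V, m₂ (R₁ a) (R₁ b) - R₁ (m₂ (R₁ a) b + m₂ a (S₁ b)) = m₁ w) ∧
    (∀ p : ℤ, ∀ a ∈ 𝒢 p, ∀ b : V, m₁ a = 0 → m₁ b = 0 →
      ∃ w : V, m₂ (S₁ a) (S₁ b) - S₁ (m₂ (R₁ a) b + m₂ a (S₁ b)) = m₁ w) := by
  refine ⟨?_, ?_, ?_⟩
  · intro p q x hx y hy z hxc hyc hzc
    refine ⟨-m₃ x y z, ?_⟩
    have h := st3 p q x hx y hy z
    simp only [hxc, hyc, hzc, map_zero, LinearMap.zero_apply, smul_zero, add_zero] at h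
    rw [map_neg, eq_neg_iff_add_eq_zero, ← h]; abel
  · intro p a ha b hac hbc
    refine ⟨-R₂ a b, ?_⟩
    have h := hR2 p a ha b
    simp only [hac, hbc, map_zero, LinearMap.zero_apply, smul_zero, add_zero] at h
    rw [map_add, map_neg, ← h]; abel
  · intro p a ha b hac hbc
    refine ⟨-S₂ a b, ?_⟩
    have h := hS2 p a ha b
    simp only [hac, hbc, map_zero, LinearMap.zero_apply, smul_zero, add_zero] at h
    rw [map_add, map_neg, ← h]; abel
end

section
/- Let (V, d_V) be a chain complex and suppose R₁, S₁ : V → V are degree-0 chain maps and R₂, S₂ : V ⊗ V → V are degree-1 maps satisfying m₂∘(R₁⊗R₁) − R₁∘m₂∘(id⊗S₁) − R₁∘m₂∘(R₁⊗id) = −(m₁∘R₂ + R₂∘(id⊗m₁) + R₂∘(m₁⊗id)) and the analogous identity with S in place of R on the outside (where m₁ = d_V and m₂ is a chain multiplication on V). Then the induced operators [R₁], [S₁] on homology H(V, m₁) form a coupled Rota-Baxter operator: [R₁](a)[R₁](b) = [R₁]([R₁](a)b + a[S₁](b)) and [S₁](a)[S₁](b) = [S₁]([R₁](a)b + a[S₁](b)).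 -/
/-- Let `(V, m₁)` be a chain complex graded by submodules `𝒢`, `m₂` a chain multiplication,
`R₁, S₁` degree-0 chain maps and `R₂, S₂` degree-1 homotopies satisfying the homotopy
Rota-Baxter identities.  Then the induced operators `[R₁], [S₁]` on homology `H(V, m₁)` form a
coupled Rota-Baxter operator: on cycles, both coupled Rota-Baxter identities hold up to a
boundary (i.e. they hold in homology). -/
theorem stmt12 (k V : Type*) [Field k] [AddCommGroup V] [Module k V]
    (𝒢 : ℤ → Submodule k V)
    (m₁ : V →ₗ[k] V) (m₂ : V →ₗ[k] V →ₗ[k] V)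
    (R₁ S₁ : V →ₗ[k] V) (R₂ S₂ : V →ₗ[k] V →ₗ[k] V)
    (hsq : ∀ x : V, m₁ (m₁ x) = 0)
    (hchain : ∀ p : ℤ, ∀ x ∈ 𝒢 p, ∀ y : V,
      m₁ (m₂ x y) = m₂ (m₁ x) y + (((-1 : ℤˣ) ^ p : ℤˣ) : ℤ) • m₂ x (m₁ y))
    (hR1 : ∀ x : V, m₁ (R₁ x) = R₁ (m₁ x))
    (hS1 : ∀ x : V, m₁ (S₁ x) = S₁ (m₁ x))
    (hR2 : ∀ p : ℤ, ∀ a ∈ 𝒢 p, ∀ b : V,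
      m₂ (R₁ a) (R₁ b) - R₁ (m₂ a (S₁ b)) - R₁ (m₂ (R₁ a) b)
        = -(m₁ (R₂ a b) + (((-1 : ℤˣ) ^ p : ℤˣ) : ℤ) • R₂ a (m₁ b) + R₂ (m₁ a) b))
    (hS2 : ∀ p : ℤ, ∀ a ∈ 𝒢 p, ∀ b : V,
      m₂ (S₁ a) (S₁ b) - S₁ (m₂ a (S₁ b)) - S₁ (m₂ (R₁ a) b)
        = -(m₁ (S₂ a b) + (((-1 : ℤˣ) ^ p : ℤˣ) : ℤ) • S₂ a (m₁ b) + S₂ (m₁ a) b)) :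
    ∀ p : ℤ, ∀ a ∈ 𝒢 p, ∀ b : V, m₁ a = 0 → m₁ b = 0 →
      (∃ w : V, m₂ (R₁ a) (R₁ b) - R₁ (m₂ (R₁ a) b + m₂ a (S₁ b)) = m₁ w) ∧
      (∃ w : V, m₂ (S₁ a) (S₁ b) - S₁ (m₂ (R₁ a) b + m₂ a (S₁ b)) = m₁ w) := by
  intro p a ha b hma hmb
  constructor
  · refine ⟨-(R₂ a b), ?_⟩
    have h := hR2 p a ha b
    rw [hma, hmb] at h
    simp only [map_zero, LinearMap.zero_apply, smul_zero, add_zero, map_add, map_neg] at h ⊢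
    rw [← h]; abel
  · refine ⟨-(S₂ a b), ?_⟩
    have h := hS2 p a ha b
    rw [hma, hmb] at h
    simp only [map_zero, LinearMap.zero_apply, smul_zero, add_zero, map_add, map_neg] at h ⊢
    rw [← h]; abel
end
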